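/- Let U ⊆ ℝ × ℝ be open, u : ℝ × ℝ → ℝ, and let ω : ℝ × ℝ → ℝ be twice continuously differentiable and nonvanishing on U with Δω = u·ω on U. Define ũ = −u + 2·(ω_x² + ω_y²)/ω². Then the function 1/ω satisfies the Moutard-transformed equation: Δ(1/ω) = ũ·(1/ω) on U. -/

import Mathlib

/-- Partial derivative of `f` at `p` in direction `v`. -/
noncomputable def pd (v : ℝ × ℝ) (f : ℝ × ℝ → ℝ) (p : ℝ × ℝ) : ℝ :=
  fderiv ℝ f p v

/-- Laplacian of `f` at `p`. -/
noncomputable def lap (f : ℝ × ℝ → ℝ) (p : ℝ × ℝ) : ℝ :=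
  pd (1, 0) (pd (1, 0) f) p + pd (0, 1) (pd (0, 1) f) p

lemma pd_congr {f g : ℝ × ℝ → ℝ} {p : ℝ × ℝ} (h : f =ᶠ[nhds p] g) (v : ℝ × ℝ) :
    pd v f p = pd v g p := by simp [pd, h.fderiv_eq]

lemma pd_mul {f g : ℝ × ℝ → ℝ} {p : ℝ × ℝ} (hf : DifferentiableAt ℝ f p)
    (hg : DifferentiableAt ℝ g p) (v : ℝ × ℝ) :
    pd v (fun q => f q * g q) p = pd v f p * g p + f p * pd v g p := by
  simp [pd, fderiv_fun_mul hf hg]; ring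

lemma pd_neg {f : ℝ × ℝ → ℝ} {p : ℝ × ℝ} (v : ℝ × ℝ) :
    pd v (fun q => -(f q)) p = -pd v f p := by
  simp [pd, fderiv_neg]

lemma pd_inv {f : ℝ × ℝ → ℝ} {p : ℝ × ℝ} (hf : DifferentiableAt ℝ f p)
    (h0 : f p ≠ 0) (v : ℝ × ℝ) :
    pd v (fun q => (f q)⁻¹) p = -((f p) ^ 2)⁻¹ * pd v f p := by
  have h := (hasFDerivAt_inv h0).comp p hf.hasFDerivAt
  have h2 := h.fderiv
  simp only [Function.comp_def] at h2
  simp [pd, h2]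
  ring

lemma pd_sq {f : ℝ × ℝ → ℝ} {p : ℝ × ℝ} (hf : DifferentiableAt ℝ f p) (v : ℝ × ℝ) :
    pd v (fun q => (f q) ^ 2) p = 2 * f p * pd v f p := by
  have h : (fun q => (f q) ^ 2) = fun q => f q * f q := by funext q; ring
  rw [h, pd_mul hf hf]; ring

/-- `1/ω` satisfies the Moutard-transformed equation
`Δ(1/ω) = ũ · (1/ω)` with `ũ = -u + 2 (ω_x² + ω_y²)/ω²`. -/
theorem inverse_omega_solves_transformed_equation
    (U : Set (ℝ × ℝ)) (hU : IsOpen U)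
    (u ω : ℝ × ℝ → ℝ)
    (hω : ContDiffOn ℝ 2 ω U)
    (hω0 : ∀ p ∈ U, ω p ≠ 0)
    (hωeq : ∀ p ∈ U, lap ω p = u p * ω p) :
    ∀ p ∈ U,
      lap (fun q => 1 / ω q) p
        = (-(u p) + 2 * ((pd (1, 0) ω p) ^ 2 + (pd (0, 1) ω p) ^ 2) / (ω p) ^ 2)
            * (1 / ω p) := by
  intro p hp
  have hωd : ∀ q ∈ U, DifferentiableAt ℝ ω q := fun q hq =>
    (hω.contDiffAt (hU.mem_nhds hq)).differentiableAt (by norm_num)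
  have hgd : ∀ v : ℝ × ℝ, DifferentiableAt ℝ (pd v ω) p := by
    intro v
    have h2 : ContDiffAt ℝ 2 ω p := hω.contDiffAt (hU.mem_nhds hp)
    have h3 : ContDiffAt ℝ 1 (fderiv ℝ ω) p := h2.fderiv_right (by norm_num)
    exact (h3.differentiableAt one_ne_zero).clm_apply (differentiableAt_const v)
  have key1 : ∀ v : ℝ × ℝ, ∀ q ∈ U,
      pd v (fun x => 1 / ω x) q = -((ω q) ^ 2)⁻¹ * pd v ω q := by
    intro v q hq
    have h : (fun x => 1 / ω x) = fun x => (ω x)⁻¹ := by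
      funext x; simp [one_div]
    rw [h, pd_inv (hωd q hq) (hω0 q hq)]
  have key2 : ∀ v w : ℝ × ℝ,
      pd w (pd v (fun x => 1 / ω x)) p
        = 2 * pd w ω p * pd v ω p * ((ω p) ^ 3)⁻¹
            - ((ω p) ^ 2)⁻¹ * pd w (pd v ω) p := by
    intro v w
    have hEq : pd v (fun x => 1 / ω x) =ᶠ[nhds p]
        fun q => -((ω q) ^ 2)⁻¹ * pd v ω q :=
      Filter.eventuallyEq_of_mem (hU.mem_nhds hp) (fun q hq => key1 v q hq)
    rw [pd_congr hEq w]
    have hsq : DifferentiableAt ℝ (fun q => (ω q) ^ 2) p := (hωd p hp).pow 2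
    have hsq0 : (ω p) ^ 2 ≠ 0 := pow_ne_zero 2 (hω0 p hp)
    have hf : DifferentiableAt ℝ (fun q => -((ω q) ^ 2)⁻¹) p :=
      ((hωd p hp).pow 2).inv hsq0 |>.neg
    rw [pd_mul hf (hgd v) w]
    have hn : pd w (fun q => -((ω q) ^ 2)⁻¹) p
        = -pd w (fun q => ((ω q) ^ 2)⁻¹) p := pd_neg w
    rw [hn, pd_inv hsq hsq0, pd_sq (hωd p hp)]
    have h0 := hω0 p hp
    field_simp
    ring
  have hlap : lap (fun q => 1 / ω q) p
      = 2 * ((pd (1, 0) ω p) ^ 2 + (pd (0, 1) ω p) ^ 2) * ((ω p) ^ 3)⁻¹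
          - ((ω p) ^ 2)⁻¹ * lap ω p := by
    simp only [lap, key2]
    ring
  rw [hlap, hωeq p hp]
  have h0 := hω0 p hp
  field_simp
  ring
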